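/- There exist constants σ₊, σ₋ ≥ 0 (depending only on p) such that for every binary quadratic form π, K_{2,p}(π) = σ₊·√(det π) if det π ≥ 0 and K_{2,p}(π) = σ₋·√(−det π) if det π ≤ 0, where det(ax² + 2bxy + cy²) = ac − b². -/

import Mathlib

open MeasureTheory

noncomputable section

/-- evaluation of the binary form of degree `m` with coefficients `a` -/
def formEval (m : ℕ) (a : Fin (m + 1) → ℝ) (z : ℝ × ℝ) : ℝ :=
  ∑ i : Fin (m + 1), a i * z.1 ^ (i : ℕ) * z.2 ^ (m - (i : ℕ))

/-- `π` is a binary homogeneous form of degree `m` (an element of H_m) -/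
def IsForm (m : ℕ) (π : ℝ × ℝ → ℝ) : Prop :=
  ∃ a : Fin (m + 1) → ℝ, ∀ z, π z = formEval m a z

/-- `p` is (the evaluation of) a polynomial of total degree at most `n` -/
def IsPolyDeg (n : ℕ) (p : ℝ × ℝ → ℝ) : Prop :=
  ∃ q : MvPolynomial (Fin 2) ℝ, q.totalDegree ≤ n ∧
    ∀ z : ℝ × ℝ, p z = MvPolynomial.eval ![z.1, z.2] q

/-- the Lagrange interpolation nodes of degree `m - 1` on the triangle with vertices
`T 0, T 1, T 2`: the points whose barycentric coordinates lie in {0, 1/(m−1), …, 1} -/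
def interpNodes (m : ℕ) (T : Fin 3 → ℝ × ℝ) : Set (ℝ × ℝ) :=
  { z | ∃ k : Fin 3 → ℕ, (∑ i, k i) = m - 1 ∧
      z = ∑ i, ((k i : ℝ) / ((m : ℝ) - 1)) • T i }

/-- `p` is the degree `m - 1` Lagrange interpolant of `v` on the triangle `T` -/
def IsInterpolant (m : ℕ) (T : Fin 3 → ℝ × ℝ) (v p : ℝ × ℝ → ℝ) : Prop :=
  IsPolyDeg (m - 1) p ∧ ∀ z ∈ interpNodes m T, p z = v z

/-- the Lagrange interpolation operator `I_{m,T}` of degree `m - 1` on the triangle `T` -/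
def interp (m : ℕ) (T : Fin 3 → ℝ × ℝ) (v : ℝ × ℝ → ℝ) : ℝ × ℝ → ℝ := by
  classical exact if h : ∃ p, IsInterpolant m T v p then h.choose else 0

/-- the (closed) triangle with vertices `T 0, T 1, T 2` -/
def triangleSet (T : Fin 3 → ℝ × ℝ) : Set (ℝ × ℝ) := convexHull ℝ (Set.range T)

/-- the area of the triangle with vertices `T 0, T 1, T 2` -/
def triArea (T : Fin 3 → ℝ × ℝ) : ℝ :=
  |((T 1).1 - (T 0).1) * ((T 2).2 - (T 0).2) -
    ((T 2).1 - (T 0).1) * ((T 1).2 - (T 0).2)| / 2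

/-- the interpolation error `‖v − I_{m,T} v‖_{L^p(T)}` -/
def lpErr (m : ℕ) (p : ℝ) (T : Fin 3 → ℝ × ℝ) (v : ℝ × ℝ → ℝ) : ℝ :=
  (∫ z in triangleSet T, |v z - interp m T v z| ^ p) ^ (1 / p)

/-- the interpolation error `‖v − I_{m,T} v‖_{L^∞(T)}` -/
def supErr (m : ℕ) (T : Fin 3 → ℝ × ℝ) (v : ℝ × ℝ → ℝ) : ℝ :=
  sSup ((fun z => |v z - interp m T v z|) '' triangleSet T)

/-- the shape function `K_{m,p}(π) = inf_{|T|=1} ‖π − I_{m,T} π‖_{L^p(T)}` -/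
def Kfun (m : ℕ) (p : ℝ) (π : ℝ × ℝ → ℝ) : ℝ :=
  sInf { e | ∃ T : Fin 3 → ℝ × ℝ, triArea T = 1 ∧ e = lpErr m p T π }


/-! ### Auxiliary machinery for statement 15 -/

/-- the quadratic form with coefficients a, b, c -/
def Qf (a b c : ℝ) : ℝ × ℝ → ℝ := fun z => a * z.1 ^ 2 + 2 * b * z.1 * z.2 + c * z.2 ^ 2

/-- signed double-area determinant of a triangle -/
def tdet (T : Fin 3 → ℝ × ℝ) : ℝ :=
  ((T 1).1 - (T 0).1) * ((T 2).2 - (T 0).2) -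
    ((T 2).1 - (T 0).1) * ((T 1).2 - (T 0).2)

/-- apply a 2×2 matrix to the vertices of a triangle -/
def mapT (s t u v : ℝ) (T : Fin 3 → ℝ × ℝ) : Fin 3 → ℝ × ℝ :=
  fun i => (s * (T i).1 + t * (T i).2, u * (T i).1 + v * (T i).2)

lemma triArea_eq (T : Fin 3 → ℝ × ℝ) : triArea T = |tdet T| / 2 := rfl

lemma tdet_ne_zero_of_area (T : Fin 3 → ℝ × ℝ) (h : triArea T = 1) : tdet T ≠ 0 := by
  intro h0
  rw [triArea_eq, h0] at h
  simp at h

lemma tdet_mapT (s t u v : ℝ) (T : Fin 3 → ℝ × ℝ) :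
    tdet (mapT s t u v T) = (s * v - t * u) * tdet T := by
  simp only [tdet, mapT]
  ring

lemma triArea_mapT (s t u v : ℝ) (T : Fin 3 → ℝ × ℝ) :
    triArea (mapT s t u v T) = |s * v - t * u| * triArea T := by
  rw [triArea_eq, triArea_eq, tdet_mapT, abs_mul]
  ring

lemma eval_of_totalDegree_le_one (q : MvPolynomial (Fin 2) ℝ) (h : q.totalDegree ≤ 1)
    (x y : ℝ) :
    MvPolynomial.eval ![x, y] q =
      q.coeff 0 + q.coeff (Finsupp.single 0 1) * x + q.coeff (Finsupp.single 1 1) * y := by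
  have hsub : q.support ⊆ {0, Finsupp.single 0 1, Finsupp.single 1 1} := by
    intro d hd
    have hle : d 0 + d 1 ≤ 1 := by
      have h1 := (MvPolynomial.le_totalDegree hd).trans h
      rwa [Finsupp.sum_fintype _ _ (fun _ => rfl), Fin.sum_univ_two] at h1
    simp only [Finset.mem_insert, Finset.mem_singleton]
    rcases Nat.lt_or_ge (d 0) 1 with h0 | h0
    · rcases Nat.lt_or_ge (d 1) 1 with h1 | h1
      · left; ext i; fin_cases i <;> simp <;> omega
      · right; right; ext i; fin_cases i <;> simp [Finsupp.single_apply] <;> omega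
    · right; left; ext i; fin_cases i <;> simp [Finsupp.single_apply] <;> omega
  have hne1 : (0 : Fin 2 →₀ ℕ) ≠ Finsupp.single 0 1 := by
    intro hh; have := DFunLike.congr_fun hh 0; simp at this
  have hne2 : (0 : Fin 2 →₀ ℕ) ≠ Finsupp.single 1 1 := by
    intro hh; have := DFunLike.congr_fun hh 1; simp at this
  have hne3 : (Finsupp.single (0 : Fin 2) 1) ≠ Finsupp.single 1 1 := by
    intro hh; have := DFunLike.congr_fun hh 0; simp [Finsupp.single_apply] at this
  rw [MvPolynomial.eval_eq']
  rw [Finset.sum_subset hsub (by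
    intro d _ hd
    rw [MvPolynomial.notMem_support_iff.mp hd, zero_mul])]
  rw [Finset.sum_insert (by simp [hne1, hne2]), Finset.sum_insert (by simp [hne3]),
    Finset.sum_singleton]
  simp [Fin.prod_univ_two, Finsupp.single_apply]
  ring

open MvPolynomial in
lemma isPolyDeg_affine (α β γ : ℝ) : IsPolyDeg 1 (fun z => α + β * z.1 + γ * z.2) := by
  refine ⟨C α + C β * X 0 + C γ * X 1, ?_, ?_⟩
  · apply le_trans (totalDegree_add _ _)
    simp only [max_le_iff]
    constructor
    · apply le_trans (totalDegree_add _ _)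
      simp only [max_le_iff, totalDegree_C]
      refine ⟨zero_le_one, le_trans (totalDegree_mul _ _) ?_⟩
      simp [totalDegree_C, totalDegree_X]
    · refine le_trans (totalDegree_mul _ _) ?_
      simp [totalDegree_C, totalDegree_X]
  · intro z; simp

lemma isPolyDeg_one_affine {f : ℝ × ℝ → ℝ} (h : IsPolyDeg 1 f) :
    ∃ α β γ : ℝ, ∀ z : ℝ × ℝ, f z = α + β * z.1 + γ * z.2 := by
  obtain ⟨q, hq, he⟩ := h
  exact ⟨q.coeff 0, q.coeff (Finsupp.single 0 1), q.coeff (Finsupp.single 1 1),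
    fun z => by rw [he z, eval_of_totalDegree_le_one q hq]⟩

lemma mem_interpNodes (T : Fin 3 → ℝ × ℝ) (j : Fin 3) : T j ∈ interpNodes 2 T := by
  refine ⟨fun i => if i = j then 1 else 0, ?_, ?_⟩
  · fin_cases j <;> simp [Fin.sum_univ_three]
  · fin_cases j <;> simp [Fin.sum_univ_three] <;> norm_num

lemma interpNodes_cases (T : Fin 3 → ℝ × ℝ) {z : ℝ × ℝ} (h : z ∈ interpNodes 2 T) :
    z = T 0 ∨ z = T 1 ∨ z = T 2 := by
  obtain ⟨k, hk, rfl⟩ := h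
  rw [Fin.sum_univ_three] at hk
  norm_num at hk
  have : (k 0 = 1 ∧ k 1 = 0 ∧ k 2 = 0) ∨ (k 0 = 0 ∧ k 1 = 1 ∧ k 2 = 0) ∨
      (k 0 = 0 ∧ k 1 = 0 ∧ k 2 = 1) := by omega
  rcases this with ⟨h0, h1, h2⟩ | ⟨h0, h1, h2⟩ | ⟨h0, h1, h2⟩ <;>
    simp [Fin.sum_univ_three, h0, h1, h2] <;> norm_num

lemma affine_unique {T : Fin 3 → ℝ × ℝ} (hΔ : tdet T ≠ 0) {α β γ α' β' γ' : ℝ}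
    (h : ∀ j, α + β * (T j).1 + γ * (T j).2 = α' + β' * (T j).1 + γ' * (T j).2) :
    ∀ z : ℝ × ℝ, α + β * z.1 + γ * z.2 = α' + β' * z.1 + γ' * z.2 := by
  have h0 := h 0; have h1 := h 1; have h2 := h 2
  have e1 : (β - β') * ((T 1).1 - (T 0).1) + (γ - γ') * ((T 1).2 - (T 0).2) = 0 := by
    linear_combination h1 - h0
  have e2 : (β - β') * ((T 2).1 - (T 0).1) + (γ - γ') * ((T 2).2 - (T 0).2) = 0 := by
    linear_combination h2 - h0
  have hβ : β = β' := by
    have : tdet T * (β - β') = 0 := by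
      simp only [tdet]; linear_combination ((T 2).2 - (T 0).2) * e1 - ((T 1).2 - (T 0).2) * e2
    rcases mul_eq_zero.mp this with hc | hc
    · exact absurd hc hΔ
    · linarith
  have hγ : γ = γ' := by
    have : tdet T * (γ - γ') = 0 := by
      simp only [tdet]; linear_combination ((T 1).1 - (T 0).1) * e2 - ((T 2).1 - (T 0).1) * e1
    rcases mul_eq_zero.mp this with hc | hc
    · exact absurd hc hΔ
    · linarith
  have hα : α = α' := by rw [hβ, hγ] at h0; linarith
  intro z; rw [hα, hβ, hγ]

lemma exists_affineInterp (T : Fin 3 → ℝ × ℝ) (v : ℝ × ℝ → ℝ) (hΔ : tdet T ≠ 0) :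
    ∃ α β γ : ℝ, IsInterpolant 2 T v (fun z => α + β * z.1 + γ * z.2) := by
  have key : ∃ α β γ : ℝ, ∀ j : Fin 3, α + β * (T j).1 + γ * (T j).2 = v (T j) := by
    set x0 := (T 0).1; set y0 := (T 0).2; set x1 := (T 1).1; set y1 := (T 1).2
    set x2 := (T 2).1; set y2 := (T 2).2
    set w0 := v (T 0); set w1 := v (T 1); set w2 := v (T 2)
    set Δ := tdet T with hΔdef
    set β := ((w1 - w0) * (y2 - y0) - (w2 - w0) * (y1 - y0)) / Δ with hβ
    set γ := ((w2 - w0) * (x1 - x0) - (w1 - w0) * (x2 - x0)) / Δ with hγ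
    refine ⟨w0 - β * x0 - γ * y0, β, γ, ?_⟩
    have hΔe : Δ = (x1 - x0) * (y2 - y0) - (x2 - x0) * (y1 - y0) := rfl
    intro j
    fin_cases j
    · show w0 - β * x0 - γ * y0 + β * x0 + γ * y0 = w0; ring
    · show w0 - β * x0 - γ * y0 + β * x1 + γ * y1 = w1
      rw [hβ, hγ]; field_simp; rw [hΔe]; ring
    · show w0 - β * x0 - γ * y0 + β * x2 + γ * y2 = w2
      rw [hβ, hγ]; field_simp; rw [hΔe]; ring
  obtain ⟨α, β, γ, hv⟩ := key
  refine ⟨α, β, γ, isPolyDeg_affine α β γ, ?_⟩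
  intro z hz
  rcases interpNodes_cases T hz with rfl | rfl | rfl
  exacts [hv 0, hv 1, hv 2]

lemma interp_eq_of {T : Fin 3 → ℝ × ℝ} {v ℓ : ℝ × ℝ → ℝ} (hΔ : tdet T ≠ 0)
    (hℓ : IsInterpolant 2 T v ℓ) (hℓa : ∃ α β γ : ℝ, ∀ z : ℝ × ℝ,
      ℓ z = α + β * z.1 + γ * z.2) :
    ∀ z, interp 2 T v z = ℓ z := by
  intro z
  have hex : ∃ q, IsInterpolant 2 T v q := ⟨ℓ, hℓ⟩
  unfold interp
  rw [dif_pos hex]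
  have hspec := hex.choose_spec
  obtain ⟨α, β, γ, h1⟩ := isPolyDeg_one_affine hspec.1
  obtain ⟨α', β', γ', h2⟩ := hℓa
  rw [h1 z, h2 z]
  apply affine_unique hΔ
  intro j
  rw [← h1, ← h2, hspec.2 _ (mem_interpNodes T j), hℓ.2 _ (mem_interpNodes T j)]

lemma lpErr_nonneg (m : ℕ) (p : ℝ) (T : Fin 3 → ℝ × ℝ) (v : ℝ × ℝ → ℝ) :
    0 ≤ lpErr m p T v := by
  apply Real.rpow_nonneg
  apply integral_nonneg
  intro z
  positivity

lemma lpErr_comp (p a b c s t u v : ℝ) (hp : 1 ≤ p) (hD : s * v - t * u ≠ 0)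
    (T : Fin 3 → ℝ × ℝ) (hT : tdet T ≠ 0) :
    lpErr 2 p T (fun z => a * (s * z.1 + t * z.2) ^ 2 +
        2 * b * (s * z.1 + t * z.2) * (u * z.1 + v * z.2) + c * (u * z.1 + v * z.2) ^ 2) =
      |s * v - t * u| * lpErr 2 p
        (mapT (s / Real.sqrt |s * v - t * u|) (t / Real.sqrt |s * v - t * u|)
          (u / Real.sqrt |s * v - t * u|) (v / Real.sqrt |s * v - t * u|) T) (Qf a b c) := by
  set πφ := fun z : ℝ × ℝ => a * (s * z.1 + t * z.2) ^ 2 +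
      2 * b * (s * z.1 + t * z.2) * (u * z.1 + v * z.2) + c * (u * z.1 + v * z.2) ^ 2
    with hπφ
  set D := s * v - t * u with hDdef
  have hDpos : 0 < |D| := abs_pos.mpr hD
  set r := Real.sqrt |D| with hrdef
  have hr : 0 < r := Real.sqrt_pos.mpr hDpos
  have hrne : r ≠ 0 := ne_of_gt hr
  have hr2 : r ^ 2 = |D| := Real.sq_sqrt hDpos.le
  set T' := mapT (s / r) (t / r) (u / r) (v / r) T with hT'def
  have hdet' : (s / r) * (v / r) - (t / r) * (u / r) = D / r ^ 2 := by rw [hDdef]; ring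
  have hT' : tdet T' ≠ 0 := by
    rw [hT'def, tdet_mapT, hdet']
    exact mul_ne_zero (div_ne_zero hD (by positivity)) hT
  set M : Matrix (Fin 2) (Fin 2) ℝ := !![s / r, t / r; u / r, v / r] with hM
  set χ : ℝ × ℝ →L[ℝ] ℝ × ℝ := LinearMap.toContinuousLinearMap
    (Matrix.toLin (Module.Basis.finTwoProd ℝ) (Module.Basis.finTwoProd ℝ) M) with hχdef
  have hχ : ∀ z : ℝ × ℝ, χ z = (s / r * z.1 + t / r * z.2, u / r * z.1 + v / r * z.2) := by
    intro z
    show (Matrix.toLin (Module.Basis.finTwoProd ℝ) (Module.Basis.finTwoProd ℝ) M) z = _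
    rw [hM, Matrix.toLin_finTwoProd_apply]
  have hχdet : |χ.det| = 1 := by
    have h1 : χ.det = M.det := by
      show LinearMap.det (χ : ℝ × ℝ →ₗ[ℝ] ℝ × ℝ) = M.det
      rw [hχdef, LinearMap.coe_toContinuousLinearMap, LinearMap.det_toLin]
    rw [h1, hM, Matrix.det_fin_two_of, hdet', abs_div,
      abs_of_nonneg (by positivity : (0:ℝ) ≤ r ^ 2), hr2, div_self (ne_of_gt hDpos)]
  have hinj : Function.Injective χ := by
    intro z w hzw
    rw [hχ z, hχ w, Prod.mk.injEq] at hzw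
    obtain ⟨h1, h2⟩ := hzw
    have h1' : s * z.1 + t * z.2 = s * w.1 + t * w.2 := by
      field_simp at h1; linarith
    have h2' : u * z.1 + v * z.2 = u * w.1 + v * w.2 := by
      field_simp at h2; linarith
    have e1 : D * z.1 = D * w.1 := by rw [hDdef]; linear_combination v * h1' - t * h2'
    have e2 : D * z.2 = D * w.2 := by rw [hDdef]; linear_combination s * h2' - u * h1'
    exact Prod.ext (mul_left_cancel₀ hD e1) (mul_left_cancel₀ hD e2)
  obtain ⟨α, β, γ, hℓ⟩ := exists_affineInterp T' (Qf a b c) hT'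
  have hIT' : ∀ z, interp 2 T' (Qf a b c) z = α + β * z.1 + γ * z.2 :=
    interp_eq_of hT' hℓ ⟨α, β, γ, fun _ => rfl⟩
  have key : ∀ z : ℝ × ℝ, πφ z = |D| * Qf a b c (χ z) := by
    intro z
    rw [hχ z]
    simp only [hπφ, Qf, ← hr2]
    field_simp
  set A := |D| * α with hA
  set B := |D| * (β * s / r + γ * u / r) with hB
  set C := |D| * (β * t / r + γ * v / r) with hC
  have hLaff : ∀ z : ℝ × ℝ, A + B * z.1 + C * z.2 =
      |D| * (α + β * (χ z).1 + γ * (χ z).2) := by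
    intro z
    rw [hχ z]
    simp only [hA, hB, hC]
    field_simp
    ring
  have hχT : ∀ j : Fin 3, χ (T j) = T' j := by
    intro j
    rw [hχ (T j)]
    rfl
  have hLint : IsInterpolant 2 T πφ (fun z => A + B * z.1 + C * z.2) := by
    refine ⟨isPolyDeg_affine _ _ _, ?_⟩
    intro z hz
    have hnode : ∀ j : Fin 3, A + B * (T j).1 + C * (T j).2 = πφ (T j) := by
      intro j
      rw [hLaff (T j), key (T j), hχT j]
      exact congrArg (fun x => |D| * x) (hℓ.2 (T' j) (mem_interpNodes T' j))
    rcases interpNodes_cases T hz with rfl | rfl | rfl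
    exacts [hnode 0, hnode 1, hnode 2]
  have hIT : ∀ z, interp 2 T πφ z = A + B * z.1 + C * z.2 :=
    interp_eq_of hT hLint ⟨A, B, C, fun _ => rfl⟩
  set g := fun w : ℝ × ℝ => |Qf a b c w - (α + β * w.1 + γ * w.2)| ^ p with hg
  have hintegrand : ∀ z, |πφ z - interp 2 T πφ z| ^ p = |D| ^ p * g (χ z) := by
    intro z
    rw [hIT z, key z, hg]
    have : |D| * Qf a b c (χ z) - (A + B * z.1 + C * z.2) =
        |D| * (Qf a b c (χ z) - (α + β * (χ z).1 + γ * (χ z).2)) := by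
      rw [hLaff z]; ring
    rw [this, abs_mul, abs_abs, Real.mul_rpow (abs_nonneg _) (abs_nonneg _)]
  have hmeas : MeasurableSet (triangleSet T) :=
    ((Set.finite_range T).isCompact_convexHull ℝ).measurableSet
  have hcov : ∫ z in triangleSet T, g (χ z) = ∫ w in χ '' triangleSet T, g w := by
    rw [integral_image_eq_integral_abs_det_fderiv_smul volume hmeas
      (fun x _ => (χ.hasFDerivAt).hasFDerivWithinAt) (Function.Injective.injOn hinj) g]
    simp only [hχdet, one_smul]
  have himg : χ '' triangleSet T = triangleSet T' := by
    have h1 : χ '' Set.range T = Set.range T' := by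
      rw [← Set.range_comp]
      exact congrArg Set.range (funext hχT)
    simp only [triangleSet]
    calc χ '' convexHull ℝ (Set.range T)
        = convexHull ℝ (χ '' Set.range T) := by
          have := (χ : ℝ × ℝ →ₗ[ℝ] ℝ × ℝ).image_convexHull (Set.range T)
          simpa using this
      _ = convexHull ℝ (Set.range T') := by rw [h1]
  have hpne : p ≠ 0 := by linarith
  have hgint_nonneg : 0 ≤ ∫ w in triangleSet T', g w := by
    apply integral_nonneg
    intro w
    simp only [hg]
    positivity
  calc lpErr 2 p T πφ
      = (∫ z in triangleSet T, |D| ^ p * g (χ z)) ^ (1 / p) := by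
        simp only [lpErr]
        congr 1
        apply integral_congr_ae
        filter_upwards with z
        exact hintegrand z
    _ = (|D| ^ p * ∫ z in triangleSet T, g (χ z)) ^ (1 / p) := by
        rw [MeasureTheory.integral_const_mul]
    _ = (|D| ^ p * ∫ w in triangleSet T', g w) ^ (1 / p) := by rw [hcov, himg]
    _ = |D| * (∫ w in triangleSet T', g w) ^ (1 / p) := by
        rw [Real.mul_rpow (by positivity) hgint_nonneg, ← Real.rpow_mul (abs_nonneg D),
          mul_one_div_cancel hpne, Real.rpow_one]
    _ = |D| * lpErr 2 p T' (Qf a b c) := by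
        congr 1
        simp only [lpErr]
        congr 1
        apply integral_congr_ae
        filter_upwards with w
        rw [hIT' w]

lemma Kfun_scale (p a b c s t u v : ℝ) (hp : 1 ≤ p) (hD : s * v - t * u ≠ 0) :
    Kfun 2 p (fun z => a * (s * z.1 + t * z.2) ^ 2 +
        2 * b * (s * z.1 + t * z.2) * (u * z.1 + v * z.2) + c * (u * z.1 + v * z.2) ^ 2) =
      |s * v - t * u| * Kfun 2 p (Qf a b c) := by
  have hDpos : 0 < |s * v - t * u| := abs_pos.mpr hD
  obtain ⟨R, hRdef⟩ : ∃ R : ℝ, R = Real.sqrt |s * v - t * u| := ⟨_, rfl⟩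
  have hRpos : 0 < R := hRdef ▸ Real.sqrt_pos.mpr hDpos
  have hRne : R ≠ 0 := ne_of_gt hRpos
  have hR2 : R ^ 2 = |s * v - t * u| := by rw [hRdef]; exact Real.sq_sqrt hDpos.le
  have habs1 : |s / R * (v / R) - t / R * (u / R)| = 1 := by
    rw [show s / R * (v / R) - t / R * (u / R) = (s * v - t * u) / R ^ 2 from by ring,
      hR2, abs_div, abs_abs, div_self (ne_of_gt hDpos)]
  have hfactor : R * v / (s * v - t * u) * (R * s / (s * v - t * u)) -
      -(R * t) / (s * v - t * u) * (-(R * u) / (s * v - t * u)) =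
      R ^ 2 * (s * v - t * u) / (s * v - t * u) ^ 2 := by field_simp
  have hDRdiv : |R ^ 2 * (s * v - t * u) / (s * v - t * u) ^ 2| = 1 := by
    rw [hR2]
    rcases abs_choice (s * v - t * u) with h | h <;> rw [h]
    · rw [show (s * v - t * u) * (s * v - t * u) / (s * v - t * u) ^ 2 = 1 from by
        field_simp, abs_one]
    · rw [show -(s * v - t * u) * (s * v - t * u) / (s * v - t * u) ^ 2 = -1 from by
        field_simp, abs_neg, abs_one]
  unfold Kfun
  have hset : { e | ∃ T, triArea T = 1 ∧ e = lpErr 2 p T (fun z =>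
        a * (s * z.1 + t * z.2) ^ 2 +
          2 * b * (s * z.1 + t * z.2) * (u * z.1 + v * z.2) + c * (u * z.1 + v * z.2) ^ 2) } =
      (fun x => |s * v - t * u| * x) ''
        { e | ∃ T, triArea T = 1 ∧ e = lpErr 2 p T (Qf a b c) } := by
    ext e
    constructor
    · rintro ⟨T, h1, rfl⟩
      have hT := tdet_ne_zero_of_area T h1
      refine ⟨lpErr 2 p (mapT (s / R) (t / R) (u / R) (v / R) T) (Qf a b c),
        ⟨_, ?_, rfl⟩, ?_⟩
      · rw [triArea_mapT, h1, mul_one, habs1]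
      · rw [hRdef]
        exact (lpErr_comp p a b c s t u v hp hD T hT).symm
    · rintro ⟨e, ⟨S, hS1, rfl⟩, rfl⟩
      have hS := tdet_ne_zero_of_area S hS1
      refine ⟨mapT (R * v / (s * v - t * u)) (-(R * t) / (s * v - t * u))
          (-(R * u) / (s * v - t * u)) (R * s / (s * v - t * u)) S, ?_, ?_⟩
      · rw [triArea_mapT, hS1, mul_one, hfactor, hDRdiv]
      · have hTdet : tdet (mapT (R * v / (s * v - t * u)) (-(R * t) / (s * v - t * u))
            (-(R * u) / (s * v - t * u)) (R * s / (s * v - t * u)) S) ≠ 0 := by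
          rw [tdet_mapT, hfactor, hR2]
          exact mul_ne_zero (div_ne_zero (mul_ne_zero (ne_of_gt hDpos) hD)
            (pow_ne_zero 2 hD)) hS
        have hback : mapT (s / R) (t / R) (u / R) (v / R)
            (mapT (R * v / (s * v - t * u)) (-(R * t) / (s * v - t * u))
              (-(R * u) / (s * v - t * u)) (R * s / (s * v - t * u)) S) = S := by
          funext i
          simp only [mapT]
          have hD' : -(u * t) + v * s ≠ 0 := by intro h0; apply hD; linarith
          apply Prod.ext <;> simp only <;> field_simp <;> ring_nf <;> field_simp [hD'] <;> ring
        rw [lpErr_comp p a b c s t u v hp hD _ hTdet, ← hRdef, hback]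
  rw [hset]
  have h := Real.sInf_smul_of_nonneg (abs_nonneg (s * v - t * u))
    { e | ∃ T, triArea T = 1 ∧ e = lpErr 2 p T (Qf a b c) }
  rw [← Set.image_smul] at h
  simp only [smul_eq_mul] at h
  exact h

lemma lpErr_neg (p : ℝ) (T : Fin 3 → ℝ × ℝ) (v : ℝ × ℝ → ℝ) (hΔ : tdet T ≠ 0) :
    lpErr 2 p T (fun z => -(v z)) = lpErr 2 p T v := by
  obtain ⟨α, β, γ, hℓ⟩ := exists_affineInterp T v hΔ
  have hIv : ∀ z, interp 2 T v z = α + β * z.1 + γ * z.2 :=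
    interp_eq_of hΔ hℓ ⟨α, β, γ, fun z => rfl⟩
  have hℓn : IsInterpolant 2 T (fun z => -(v z)) (fun z => -α + -β * z.1 + -γ * z.2) := by
    refine ⟨isPolyDeg_affine _ _ _, ?_⟩
    intro z hz
    have := hℓ.2 z hz
    simp only
    linear_combination -this
  have hIn : ∀ z, interp 2 T (fun z => -(v z)) z = -α + -β * z.1 + -γ * z.2 :=
    interp_eq_of hΔ hℓn ⟨-α, -β, -γ, fun z => rfl⟩
  simp only [lpErr]
  congr 1
  apply integral_congr_ae
  filter_upwards with z
  rw [hIn z, hIv z, show -(v z) - (-α + -β * z.1 + -γ * z.2) =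
    -(v z - (α + β * z.1 + γ * z.2)) from by ring, abs_neg]

lemma Kfun_neg (p : ℝ) (v : ℝ × ℝ → ℝ) :
    Kfun 2 p (fun z => -(v z)) = Kfun 2 p v := by
  unfold Kfun
  congr 1
  ext e
  constructor
  · rintro ⟨T, h1, rfl⟩
    exact ⟨T, h1, (lpErr_neg p T v (tdet_ne_zero_of_area T h1))⟩
  · rintro ⟨T, h1, rfl⟩
    exact ⟨T, h1, (lpErr_neg p T v (tdet_ne_zero_of_area T h1)).symm⟩

lemma Kfun_nonneg (m : ℕ) (p : ℝ) (v : ℝ × ℝ → ℝ) : 0 ≤ Kfun m p v := by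
  apply Real.sInf_nonneg
  rintro e ⟨T, -, rfl⟩
  exact lpErr_nonneg m p T v

lemma Kfun_Qf_neg (p a b c : ℝ) : Kfun 2 p (Qf (-a) (-b) (-c)) = Kfun 2 p (Qf a b c) := by
  rw [← Kfun_neg p (Qf a b c)]
  congr 1
  funext z
  simp only [Qf]
  ring

lemma Kfun_K100 (p : ℝ) (hp : 1 ≤ p) : Kfun 2 p (Qf 1 0 0) = 0 := by
  have h2 := Kfun_scale p 1 0 0 2 0 0 1 hp (by norm_num)
  rw [show (fun z : ℝ × ℝ => (1:ℝ) * (2 * z.1 + 0 * z.2) ^ 2 +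
      2 * 0 * (2 * z.1 + 0 * z.2) * (0 * z.1 + 1 * z.2) +
      0 * (0 * z.1 + 1 * z.2) ^ 2) = Qf 4 0 0 from funext fun z => by
    simp only [Qf]; ring] at h2
  have h4 := Kfun_scale p 1 0 0 2 0 0 2 hp (by norm_num)
  rw [show (fun z : ℝ × ℝ => (1:ℝ) * (2 * z.1 + 0 * z.2) ^ 2 +
      2 * 0 * (2 * z.1 + 0 * z.2) * (0 * z.1 + 2 * z.2) +
      0 * (0 * z.1 + 2 * z.2) ^ 2) = Qf 4 0 0 from funext fun z => by
    simp only [Qf]; ring] at h4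
  norm_num at h2 h4
  linarith

lemma Kfun_rank_one_aux (p : ℝ) (hp : 1 ≤ p) (a b c : ℝ) (ha : 0 < a)
    (hd : a * c - b ^ 2 = 0) : Kfun 2 p (Qf a b c) = 0 := by
  have hane : a ≠ 0 := ne_of_gt ha
  have hc : c = b ^ 2 / a := by rw [eq_div_iff hane]; linarith
  subst hc
  obtain ⟨w, hw, hw2⟩ : ∃ w : ℝ, 0 < w ∧ a = w ^ 2 :=
    ⟨Real.sqrt a, Real.sqrt_pos.mpr ha, (Real.sq_sqrt ha.le).symm⟩
  subst hw2
  have hwne : w ≠ 0 := ne_of_gt hw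
  have h := Kfun_scale p 1 0 0 w (b / w) 0 1 hp (by simpa using hwne)
  rw [show (fun z : ℝ × ℝ => (1:ℝ) * (w * z.1 + b / w * z.2) ^ 2 +
      2 * 0 * (w * z.1 + b / w * z.2) * (0 * z.1 + 1 * z.2) +
      0 * (0 * z.1 + 1 * z.2) ^ 2) = Qf (w ^ 2) b (b ^ 2 / w ^ 2) from funext fun z => by
    simp only [Qf]; field_simp; ring] at h
  rw [h, Kfun_K100 p hp, mul_zero]

lemma Kfun_rank_one (p : ℝ) (hp : 1 ≤ p) (a b c : ℝ) (hd : a * c - b ^ 2 = 0) :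
    Kfun 2 p (Qf a b c) = 0 := by
  rcases lt_trichotomy a 0 with ha | ha | ha
  · rw [← Kfun_Qf_neg]
    exact Kfun_rank_one_aux p hp (-a) (-b) (-c) (by linarith) (by linear_combination hd)
  · subst ha
    have hb2 : b ^ 2 = 0 := by linear_combination -hd
    have hb : b = 0 := by
      exact pow_eq_zero_iff (two_ne_zero) |>.mp hb2
    subst hb
    rcases lt_trichotomy c 0 with hc | hc | hc
    · rw [← Kfun_Qf_neg]
      obtain ⟨w, hw, hw2⟩ : ∃ w : ℝ, 0 < w ∧ -c = w ^ 2 :=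
        ⟨Real.sqrt (-c), Real.sqrt_pos.mpr (by linarith), (Real.sq_sqrt (by linarith)).symm⟩
      have h := Kfun_scale p 1 0 0 0 w 1 0 hp (by simp [ne_of_gt hw])
      rw [show (fun z : ℝ × ℝ => (1:ℝ) * (0 * z.1 + w * z.2) ^ 2 +
          2 * 0 * (0 * z.1 + w * z.2) * (1 * z.1 + 0 * z.2) +
          0 * (1 * z.1 + 0 * z.2) ^ 2) = Qf (-0) (-0) (-c) from funext fun z => by
        simp only [Qf]; rw [hw2]; ring] at h
      rw [h, Kfun_K100 p hp, mul_zero]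
    · subst hc
      have h := Kfun_scale p 0 0 0 2 0 0 1 hp (by norm_num)
      rw [show (fun z : ℝ × ℝ => (0:ℝ) * (2 * z.1 + 0 * z.2) ^ 2 +
          2 * 0 * (2 * z.1 + 0 * z.2) * (0 * z.1 + 1 * z.2) +
          0 * (0 * z.1 + 1 * z.2) ^ 2) = Qf 0 0 0 from funext fun z => by
        simp only [Qf]; ring] at h
      norm_num at h
      linarith
    · obtain ⟨w, hw, hw2⟩ : ∃ w : ℝ, 0 < w ∧ c = w ^ 2 :=
        ⟨Real.sqrt c, Real.sqrt_pos.mpr hc, (Real.sq_sqrt hc.le).symm⟩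
      have h := Kfun_scale p 1 0 0 0 w 1 0 hp (by simp [ne_of_gt hw])
      rw [show (fun z : ℝ × ℝ => (1:ℝ) * (0 * z.1 + w * z.2) ^ 2 +
          2 * 0 * (0 * z.1 + w * z.2) * (1 * z.1 + 0 * z.2) +
          0 * (1 * z.1 + 0 * z.2) ^ 2) = Qf 0 0 c from funext fun z => by
        simp only [Qf]; rw [hw2]; ring] at h
      rw [h, Kfun_K100 p hp, mul_zero]
  · exact Kfun_rank_one_aux p hp a b c ha hd

lemma Kfun_posdef_aux (p : ℝ) (hp : 1 ≤ p) (a b c : ℝ) (ha : 0 < a)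
    (hd : 0 < a * c - b ^ 2) :
    Kfun 2 p (Qf a b c) = Real.sqrt (a * c - b ^ 2) * Kfun 2 p (Qf 1 0 1) := by
  have hane : a ≠ 0 := ne_of_gt ha
  obtain ⟨q, hq, hq2⟩ : ∃ q : ℝ, 0 < q ∧ q ^ 2 = a * c - b ^ 2 :=
    ⟨Real.sqrt (a * c - b ^ 2), Real.sqrt_pos.mpr hd, Real.sq_sqrt hd.le⟩
  have hc : c = (q ^ 2 + b ^ 2) / a := by rw [eq_div_iff hane]; linarith
  subst hc
  obtain ⟨w, hw, hw2⟩ : ∃ w : ℝ, 0 < w ∧ a = w ^ 2 :=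
    ⟨Real.sqrt a, Real.sqrt_pos.mpr ha, (Real.sq_sqrt ha.le).symm⟩
  subst hw2
  have hwne : w ≠ 0 := ne_of_gt hw
  have hqne : q ≠ 0 := ne_of_gt hq
  have hD : w * (q / w) - b / w * 0 ≠ 0 := by
    rw [show w * (q / w) - b / w * 0 = q from by field_simp; ring]
    exact hqne
  have h := Kfun_scale p 1 0 1 w (b / w) 0 (q / w) hp hD
  rw [show (fun z : ℝ × ℝ => (1:ℝ) * (w * z.1 + b / w * z.2) ^ 2 +
      2 * 0 * (w * z.1 + b / w * z.2) * (0 * z.1 + q / w * z.2) +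
      1 * (0 * z.1 + q / w * z.2) ^ 2) = Qf (w ^ 2) b ((q ^ 2 + b ^ 2) / w ^ 2)
    from funext fun z => by
    simp only [Qf]; field_simp; ring] at h
  rw [h, show w * (q / w) - b / w * 0 = q from by field_simp; ring, abs_of_pos hq]
  congr 1
  rw [← hq2]
  exact (Real.sqrt_sq hq.le).symm

lemma Kfun_posdef (p : ℝ) (hp : 1 ≤ p) (a b c : ℝ) (hd : 0 < a * c - b ^ 2) :
    Kfun 2 p (Qf a b c) = Real.sqrt (a * c - b ^ 2) * Kfun 2 p (Qf 1 0 1) := by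
  rcases lt_trichotomy a 0 with ha | ha | ha
  · rw [← Kfun_Qf_neg]
    have h := Kfun_posdef_aux p hp (-a) (-b) (-c) (by linarith) (by nlinarith)
    rw [h, show -a * -c - (-b) ^ 2 = a * c - b ^ 2 from by ring]
  · exfalso; subst ha; nlinarith [sq_nonneg b]
  · exact Kfun_posdef_aux p hp a b c ha hd

lemma Kfun_indef_aux (p : ℝ) (hp : 1 ≤ p) (a b c : ℝ) (ha : 0 < a)
    (hd : a * c - b ^ 2 < 0) :
    Kfun 2 p (Qf a b c) = Real.sqrt (b ^ 2 - a * c) * Kfun 2 p (Qf 1 0 (-1)) := by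
  have hane : a ≠ 0 := ne_of_gt ha
  obtain ⟨q, hq, hq2⟩ : ∃ q : ℝ, 0 < q ∧ q ^ 2 = b ^ 2 - a * c :=
    ⟨Real.sqrt (b ^ 2 - a * c), Real.sqrt_pos.mpr (by linarith),
      Real.sq_sqrt (by linarith)⟩
  have hc : c = (b ^ 2 - q ^ 2) / a := by rw [eq_div_iff hane]; linarith
  subst hc
  obtain ⟨w, hw, hw2⟩ : ∃ w : ℝ, 0 < w ∧ a = w ^ 2 :=
    ⟨Real.sqrt a, Real.sqrt_pos.mpr ha, (Real.sq_sqrt ha.le).symm⟩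
  subst hw2
  have hwne : w ≠ 0 := ne_of_gt hw
  have hqne : q ≠ 0 := ne_of_gt hq
  have hD : w * (q / w) - b / w * 0 ≠ 0 := by
    rw [show w * (q / w) - b / w * 0 = q from by field_simp; ring]
    exact hqne
  have h := Kfun_scale p 1 0 (-1) w (b / w) 0 (q / w) hp hD
  rw [show (fun z : ℝ × ℝ => (1:ℝ) * (w * z.1 + b / w * z.2) ^ 2 +
      2 * 0 * (w * z.1 + b / w * z.2) * (0 * z.1 + q / w * z.2) +
      (-1) * (0 * z.1 + q / w * z.2) ^ 2) = Qf (w ^ 2) b ((b ^ 2 - q ^ 2) / w ^ 2)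
    from funext fun z => by
    simp only [Qf]; field_simp; ring] at h
  rw [h, show w * (q / w) - b / w * 0 = q from by field_simp; ring, abs_of_pos hq]
  congr 1
  rw [← hq2]
  exact (Real.sqrt_sq hq.le).symm

lemma Kfun_indef (p : ℝ) (hp : 1 ≤ p) (a b c : ℝ) (hd : a * c - b ^ 2 < 0) :
    Kfun 2 p (Qf a b c) = Real.sqrt (b ^ 2 - a * c) * Kfun 2 p (Qf 1 0 (-1)) := by
  rcases lt_trichotomy a 0 with ha | ha | ha
  · rw [← Kfun_Qf_neg]
    have h := Kfun_indef_aux p hp (-a) (-b) (-c) (by linarith) (by nlinarith)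
    rw [h, show (-b) ^ 2 - -a * -c = b ^ 2 - a * c from by ring]
  · subst ha
    have hb : b ≠ 0 := by
      intro h0
      rw [h0] at hd
      norm_num at hd
    have hD : 1 * ((c / b - b) / 2) - (b + c / b) / 2 * 1 ≠ 0 := by
      rw [show 1 * ((c / b - b) / 2) - (b + c / b) / 2 * 1 = -b from by field_simp; ring]
      exact neg_ne_zero.mpr hb
    have h := Kfun_scale p 1 0 (-1) 1 ((b + c / b) / 2) 1 ((c / b - b) / 2) hp hD
    rw [show (fun z : ℝ × ℝ => (1:ℝ) * (1 * z.1 + (b + c / b) / 2 * z.2) ^ 2 +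
        2 * 0 * (1 * z.1 + (b + c / b) / 2 * z.2) * (1 * z.1 + (c / b - b) / 2 * z.2) +
        (-1) * (1 * z.1 + (c / b - b) / 2 * z.2) ^ 2) = Qf 0 b c from funext fun z => by
      simp only [Qf]; field_simp; ring] at h
    rw [h, show 1 * ((c / b - b) / 2) - (b + c / b) / 2 * 1 = -b from by field_simp; ring,
      abs_neg, show b ^ 2 - 0 * c = b ^ 2 from by ring, Real.sqrt_sq_eq_abs]
  · exact Kfun_indef_aux p hp a b c ha hd

/-- there exist constants σ₊, σ₋ ≥ 0 depending only on p such that for every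
binary quadratic form π = ax² + 2bxy + cy², K_{2,p}(π) = σ₊·√(det π) if det π ≥ 0 and
K_{2,p}(π) = σ₋·√(−det π) if det π ≤ 0, where det π = ac − b². -/
theorem stmt15 (p : ℝ) (hp : 1 ≤ p) :
    ∃ σp σm : ℝ, 0 ≤ σp ∧ 0 ≤ σm ∧ ∀ a b c : ℝ,
      (0 ≤ a * c - b ^ 2 →
        Kfun 2 p (fun z => a * z.1 ^ 2 + 2 * b * z.1 * z.2 + c * z.2 ^ 2) =
          σp * Real.sqrt (a * c - b ^ 2)) ∧
      (a * c - b ^ 2 ≤ 0 →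
        Kfun 2 p (fun z => a * z.1 ^ 2 + 2 * b * z.1 * z.2 + c * z.2 ^ 2) =
          σm * Real.sqrt (b ^ 2 - a * c)) := by
  refine ⟨Kfun 2 p (Qf 1 0 1), Kfun 2 p (Qf 1 0 (-1)), Kfun_nonneg _ _ _,
    Kfun_nonneg _ _ _, ?_⟩
  intro a b c
  constructor
  · intro hd
    show Kfun 2 p (Qf a b c) = _
    rcases eq_or_lt_of_le hd with heq | hlt
    · rw [← heq, Real.sqrt_zero, mul_zero]
      exact Kfun_rank_one p hp a b c heq.symm
    · rw [Kfun_posdef p hp a b c hlt, mul_comm]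
  · intro hd
    show Kfun 2 p (Qf a b c) = _
    rcases eq_or_lt_of_le hd with heq | hlt
    · rw [show b ^ 2 - a * c = -(a * c - b ^ 2) from by ring, heq, neg_zero,
        Real.sqrt_zero, mul_zero]
      exact Kfun_rank_one p hp a b c heq
    · rw [Kfun_indef p hp a b c hlt, mul_comm]

end
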